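/- Let α ∈ (0,2), β ∈ (0,α), T > 0, d ≥ 1, and let δ_α = (2^{d+α} α K / s_{d−1}) (1 − 2^{−α})^{−1} for a constant K ≥ 1. Let (Z_k)_{k≥1} be i.i.d. random vectors on ℝ^d whose common law μ satisfies, for all z > 1, μ(|Z| ≥ z) ≥ s_{d−1} z^{−α} / (2^{d+α} α K) and μ(z ≤ |Z| ≤ 2z) ≥ 1/(δ_α z^α). Define the Euler–Maruyama scheme Y_{k+1} = Y_k − η Y_k log(1+|Y_k|) + η^{1/α} Z_{k+1}, Y_0 = x_0, with step size η = T/n. Set K_1 = 2(e^{δ_α/β} + 2)/T and assume T/n ≤ 1, K_1 < (δ_α − log δ_α)/(α − β), and e^{n K_1} ≥ |x_0|(1 + log(1+|x_0|)). Then there exist a constant C > 0 and a sequence of non-empty events Ω_n with P(Ω_n) ≥ C e^{−α n K_1}/(n δ_α^n) and |Y_n(ω)| ≥ exp{n K_1 + (n−1) δ_α/β} for every ω ∈ Ω_n and all n large enough; consequently, lim_{n→∞} E|Y_n|^β = ∞. -/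

import Mathlib

open MeasureTheory ProbabilityTheory Real Filter

/-- Surface area of the unit sphere `𝕊^{d-1} ⊆ ℝ^d`: `s_{d-1} = 2 π^{d/2} / Γ(d/2)`. -/
noncomputable def sphereArea (d : ℕ) : ℝ := 2 * Real.pi ^ ((d : ℝ) / 2) / Real.Gamma ((d : ℝ) / 2)

lemma sphereArea_pos {d : ℕ} (hd : 1 ≤ d) : 0 < sphereArea d := by
  have h2 : (0:ℝ) < (d:ℝ) / 2 := by
    have : (1:ℝ) ≤ (d:ℝ) := by exact_mod_cast hd
    linarith
  have hπ : (0:ℝ) < Real.pi ^ ((d:ℝ)/2) := Real.rpow_pos_of_pos Real.pi_pos _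
  have hΓ : 0 < Real.Gamma ((d:ℝ)/2) := Real.Gamma_pos_of_pos h2
  unfold sphereArea
  positivity

lemma norm_add_ge_sub {E : Type*} [SeminormedAddCommGroup E] (a b : E) :
    ‖b‖ - ‖a‖ ≤ ‖a + b‖ := by
  have h := norm_sub_le (a + b) a
  simp only [add_sub_cancel_left] at h
  linarith

lemma norm_add_ge_sub' {E : Type*} [SeminormedAddCommGroup E] (a b : E) :
    ‖a‖ - ‖b‖ ≤ ‖a + b‖ := by
  rw [add_comm]
  exact norm_add_ge_sub b a

set_option maxHeartbeats 4000000 in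
/-- Divergence of the Euler–Maruyama scheme
`Y_{k+1} = Y_k − η Y_k log(1+|Y_k|) + η^{1/α} Z_{k+1}` with step `η = T/n`, driven by i.i.d.
noise whose law satisfies the stable-type lower tail bounds: there are `C > 0` and non-empty
events `Ω_n` with `P(Ω_n) ≥ C e^{−α n K₁}/(n δ_α^n)` and
`|Y_n| ≥ exp{n K₁ + (n−1) δ_α/β}` on `Ω_n` for all large `n`; consequently
`E|Y_n|^β → ∞`. -/
theorem em_divergence_stable_noise
    {Ω : Type*} [MeasurableSpace Ω] (P : Measure Ω) [IsProbabilityMeasure P]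
    (d : ℕ) (hd : 1 ≤ d) (α β T K : ℝ)
    (hα : α ∈ Set.Ioo (0 : ℝ) 2) (hβ : β ∈ Set.Ioo (0 : ℝ) α) (hT : 0 < T) (hK : 1 ≤ K)
    (δ : ℝ) (hδ : δ = 2 ^ ((d : ℝ) + α) * α * K / sphereArea d * (1 - 2 ^ (-α))⁻¹)
    (μ : Measure (EuclideanSpace ℝ (Fin d)))
    (hμ_tail : ∀ z : ℝ, 1 < z →
      ENNReal.ofReal (sphereArea d * z ^ (-α) / (2 ^ ((d : ℝ) + α) * α * K))
        ≤ μ {x | z ≤ ‖x‖})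
    (hμ_annulus : ∀ z : ℝ, 1 < z →
      ENNReal.ofReal (1 / (δ * z ^ α)) ≤ μ {x | z ≤ ‖x‖ ∧ ‖x‖ ≤ 2 * z})
    (Z : ℕ → Ω → EuclideanSpace ℝ (Fin d))
    (hIndep : iIndepFun Z P)
    (hLaw : ∀ k, Measure.map (Z k) P = μ)
    (x₀ : EuclideanSpace ℝ (Fin d))
    (Y : ℕ → ℕ → Ω → EuclideanSpace ℝ (Fin d))
    (hY0 : ∀ n ω, Y n 0 ω = x₀)
    (hYrec : ∀ n k ω, Y n (k + 1) ω
      = Y n k ω - (T / n * Real.log (1 + ‖Y n k ω‖)) • Y n k ω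
        + ((T / n) ^ α⁻¹ : ℝ) • Z (k + 1) ω)
    (K₁ : ℝ) (hK₁ : K₁ = 2 * (Real.exp (δ / β) + 2) / T)
    (hK₁small : K₁ < (δ - Real.log δ) / (α - β)) :
    ∃ C : ℝ, 0 < C ∧ ∃ Ωn : ℕ → Set Ω,
      (∀ᶠ n : ℕ in atTop,
        (Ωn n).Nonempty ∧
        ENNReal.ofReal (C * Real.exp (-α * n * K₁) / (n * δ ^ n)) ≤ P (Ωn n) ∧
        ∀ ω ∈ Ωn n, Real.exp (n * K₁ + ((n : ℝ) - 1) * δ / β) ≤ ‖Y n n ω‖) ∧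
      Tendsto (fun n : ℕ => ∫⁻ ω, ENNReal.ofReal (‖Y n n ω‖ ^ β) ∂P) atTop (nhds ⊤) := by
  obtain ⟨hα0, hα2⟩ := hα
  obtain ⟨hβ0, hβα⟩ := hβ
  have hs : 0 < sphereArea d := sphereArea_pos hd
  have h2dα : (0:ℝ) < 2 ^ ((d : ℝ) + α) := Real.rpow_pos_of_pos (by norm_num) _
  have h2α : (2:ℝ) ^ (-α) < 1 :=
    Real.rpow_lt_one_of_one_lt_of_neg (by norm_num) (by linarith)
  have h2α0 : (0:ℝ) < 2 ^ (-α) := Real.rpow_pos_of_pos (by norm_num) _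
  have hδ0 : 0 < δ := by
    rw [hδ]
    have hK0 : (0:ℝ) < K := by linarith
    apply mul_pos (div_pos (by positivity) hs) (inv_pos.2 (by linarith))
  have hK₁0 : 0 < K₁ := by rw [hK₁]; positivity
  have hδβ : 0 ≤ δ / β := le_of_lt (div_pos hδ0 hβ0)
  -- AEMeasurability of the noise
  have hZae : ∀ k, AEMeasurable (Z k) P := by
    intro k
    by_contra h
    have h0 : μ = 0 := by rw [← hLaw k, Measure.map_of_not_aemeasurable h]
    have h2 := hμ_tail 2 (by norm_num)
    rw [h0] at h2
    simp only [Measure.coe_zero, Pi.zero_apply, le_zero_iff, ENNReal.ofReal_eq_zero] at h2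
    have : (0:ℝ) < sphereArea d * 2 ^ (-α) / (2 ^ ((d : ℝ) + α) * α * K) := by
      have hK0 : (0:ℝ) < K := by linarith
      positivity
    linarith
  have hPmap : ∀ k (S : Set (EuclideanSpace ℝ (Fin d))), MeasurableSet S →
      P (Z k ⁻¹' S) = μ S := by
    intro k S hS
    rw [← hLaw k, Measure.map_apply_of_aemeasurable (hZae k) hS]
  -- constants
  set B : ℝ := ‖x₀‖ * (1 + T * Real.log (1 + ‖x₀‖)) with hB_def
  have hlogx₀ : 0 ≤ Real.log (1 + ‖x₀‖) := Real.log_nonneg (by linarith [norm_nonneg x₀])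
  have hB : 0 ≤ B := by positivity
  set c₀ : ℝ := sphereArea d / (2 ^ ((d : ℝ) + α) * α * K) with hc₀_def
  have hc₀ : 0 < c₀ := by
    have hK0 : (0:ℝ) < K := by linarith
    positivity
  have h1B : (0:ℝ) < (1 + B) ^ (-α) := Real.rpow_pos_of_pos (by linarith) _
  set C : ℝ := c₀ * (1 + B) ^ (-α) * T * δ * Real.exp (-α) with hC_def
  have hC : 0 < C := by positivity
  -- event sets
  set rr : ℕ → ℝ := fun n => (Real.exp (n * K₁) + B) / (T / n) ^ α⁻¹ with hrr_def
  set Sa : ℕ → Set (EuclideanSpace ℝ (Fin d)) := fun n => {x | rr n ≤ ‖x‖} with hSa_def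
  set Sb : ℕ → Set (EuclideanSpace ℝ (Fin d)) :=
    fun n => {x | 1 + 1/(n:ℝ) ≤ ‖x‖ ∧ ‖x‖ ≤ 2 * (1 + 1/(n:ℝ))} with hSb_def
  have hSa_m : ∀ n, MeasurableSet (Sa n) :=
    fun n => measurableSet_le measurable_const measurable_norm
  have hSb_m : ∀ n, MeasurableSet (Sb n) := by
    intro n
    exact (measurableSet_le measurable_const measurable_norm).inter
      (measurableSet_le measurable_norm measurable_const)
  set Ωn : ℕ → Set Ω :=
    fun n => ⋂ k ∈ Finset.Icc 1 n, Z k ⁻¹' (if k = 1 then Sa n else Sb n) with hΩn_def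
  -- the main eventual statement, plus the lintegral lower bound
  set γ : ℝ := (β - α) * K₁ + δ - Real.log δ with hγ_def
  have hγ : 0 < γ := by
    have h := (lt_div_iff₀ (by linarith : (0:ℝ) < α - β)).1 hK₁small
    rw [hγ_def]; nlinarith
  have hbig : ∀ᶠ n : ℕ in atTop,
      ((Ωn n).Nonempty ∧
        ENNReal.ofReal (C * Real.exp (-α * n * K₁) / (n * δ ^ n)) ≤ P (Ωn n) ∧
        ∀ ω ∈ Ωn n, Real.exp (n * K₁ + ((n : ℝ) - 1) * δ / β) ≤ ‖Y n n ω‖) ∧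
      ENNReal.ofReal (C * Real.exp (-δ) * Real.exp ((n:ℝ) * γ) / n)
        ≤ ∫⁻ ω, ENNReal.ofReal (‖Y n n ω‖ ^ β) ∂P := by
    have hNT : ∀ᶠ n : ℕ in atTop, T ≤ (n:ℝ) :=
      tendsto_natCast_atTop_atTop.eventually_ge_atTop T
    filter_upwards [hNT, eventually_ge_atTop 1] with n hnT hn1
    have hn0 : (0:ℝ) < n := by
      have : (1:ℝ) ≤ (n:ℝ) := by exact_mod_cast hn1
      linarith
    have hn1' : (1:ℝ) ≤ (n:ℝ) := by exact_mod_cast hn1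
    have hη0 : 0 < T / (n:ℝ) := div_pos hT hn0
    have hη1 : T / (n:ℝ) ≤ 1 := by rw [div_le_one hn0]; exact hnT
    have hc'0 : 0 < (T/(n:ℝ)) ^ (α⁻¹) := Real.rpow_pos_of_pos hη0 _
    have hc'1 : (T/(n:ℝ)) ^ (α⁻¹) ≤ 1 := Real.rpow_le_one hη0.le hη1 (by positivity)
    have hE1 : 1 ≤ Real.exp ((n:ℝ) * K₁) := Real.one_le_exp (by positivity)
    have hrrval : (T/(n:ℝ)) ^ (α⁻¹) * rr n = Real.exp ((n:ℝ) * K₁) + B := by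
      rw [hrr_def]; field_simp
    have hrr0 : 0 < rr n := div_pos (by positivity) hc'0
    have hrr1 : 1 < rr n := by
      have h1 : Real.exp ((n:ℝ)*K₁) + B ≤ rr n := by
        rw [hrr_def, le_div_iff₀ hc'0]
        nlinarith
      have h2 : (1:ℝ) < Real.exp ((n:ℝ)*K₁) := by
        rw [Real.one_lt_exp_iff]
        positivity
      linarith
    have hz1 : (1:ℝ) < 1 + 1/(n:ℝ) := by
      have : (0:ℝ) < 1/(n:ℝ) := by positivity
      linarith
    -- membership facts
    have hmem : ∀ ω ∈ Ωn n, rr n ≤ ‖Z 1 ω‖ ∧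
        ∀ k, 2 ≤ k → k ≤ n → 1 + 1/(n:ℝ) ≤ ‖Z k ω‖ ∧ ‖Z k ω‖ ≤ 2 * (1 + 1/(n:ℝ)) := by
      intro ω hω
      rw [hΩn_def, Set.mem_iInter₂] at hω
      constructor
      · have h := hω 1 (by simp [Finset.mem_Icc]; omega)
        rw [if_pos rfl] at h
        exact h
      · intro k h2 hkn
        have h := hω k (by simp [Finset.mem_Icc]; omega)
        rw [if_neg (by omega)] at h
        exact h
    -- growth of the scheme on Ωn
    have hgrow : ∀ ω ∈ Ωn n, ∀ k, 1 ≤ k → k ≤ n →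
        Real.exp ((n:ℝ) * K₁ + ((k:ℝ) - 1) * δ / β) ≤ ‖Y n k ω‖ := by
      intro ω hω
      obtain ⟨hZ1, hZk⟩ := hmem ω hω
      intro k
      induction k with
      | zero => intro h; omega
      | succ k ih =>
        intro _ hkn
        rcases Nat.eq_zero_or_pos k with hk0 | hk1
        · -- base case k+1 = 1
          subst hk0
          have e1 : Y n 1 ω = x₀ - (T/(n:ℝ) * Real.log (1+‖x₀‖)) • x₀
              + ((T/(n:ℝ)) ^ α⁻¹ : ℝ) • Z 1 ω := by
            have := hYrec n 0 ω
            rw [hY0 n ω] at this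
            exact this
          have h₁ : ‖((T/(n:ℝ)) ^ α⁻¹ : ℝ) • Z 1 ω‖ = (T/(n:ℝ)) ^ α⁻¹ * ‖Z 1 ω‖ := by
            rw [norm_smul, Real.norm_eq_abs, abs_of_pos hc'0]
          have h₂ : ‖x₀ - (T/(n:ℝ) * Real.log (1+‖x₀‖)) • x₀‖ ≤ B := by
            refine (norm_sub_le _ _).trans ?_
            rw [norm_smul, Real.norm_eq_abs, abs_of_nonneg (by positivity)]
            have hTn : T/(n:ℝ) ≤ T := by
              rw [div_le_iff₀ hn0]; nlinarith
            rw [hB_def]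
            have h5 := mul_le_mul_of_nonneg_right
              (mul_le_mul_of_nonneg_right hTn hlogx₀) (norm_nonneg x₀)
            nlinarith [norm_nonneg x₀]
          have h₃ : Real.exp ((n:ℝ)*K₁) + B ≤ (T/(n:ℝ)) ^ α⁻¹ * ‖Z 1 ω‖ := by
            rw [← hrrval]
            exact mul_le_mul_of_nonneg_left hZ1 hc'0.le
          have h₄ : ‖((T/(n:ℝ)) ^ α⁻¹ : ℝ) • Z 1 ω‖
              - ‖x₀ - (T/(n:ℝ) * Real.log (1+‖x₀‖)) • x₀‖ ≤ ‖Y n 1 ω‖ := by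
            rw [e1]
            exact norm_add_ge_sub _ _
          have : Real.exp ((n:ℝ)*K₁) ≤ ‖Y n 1 ω‖ := by
            rw [h₁] at h₄; linarith
          calc Real.exp ((n:ℝ) * K₁ + ((((0:ℕ)+1:ℕ):ℝ) - 1) * δ / β)
              = Real.exp ((n:ℝ) * K₁) := by norm_num
            _ ≤ ‖Y n 1 ω‖ := this
        · -- inductive step, k ≥ 1
          have hy := ih hk1 (by omega)
          set y := Y n k ω with hy_def
          have hyM : 0 ≤ (n:ℝ)*K₁ + ((k:ℝ)-1)*δ/β := by
            have hk1' : (1:ℝ) ≤ (k:ℝ) := by exact_mod_cast hk1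
            have : 0 ≤ ((k:ℝ)-1)*δ/β := by
              apply div_nonneg (mul_nonneg (by linarith) hδ0.le) hβ0.le
            positivity
          have hy1 : 1 ≤ ‖y‖ := le_trans (Real.one_le_exp hyM) hy
          have hZ := hZk (k+1) (by omega) hkn
          have hlog : (n:ℝ)*K₁ ≤ Real.log (1 + ‖y‖) := by
            rw [Real.le_log_iff_exp_le (by linarith)]
            have : Real.exp ((n:ℝ)*K₁) ≤ Real.exp ((n:ℝ)*K₁ + ((k:ℝ)-1)*δ/β) := by
              apply Real.exp_le_exp.2
              have hk1' : (1:ℝ) ≤ (k:ℝ) := by exact_mod_cast hk1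
              have : 0 ≤ ((k:ℝ)-1)*δ/β :=
                div_nonneg (mul_nonneg (by linarith) hδ0.le) hβ0.le
              linarith
            linarith
          set c : ℝ := T/(n:ℝ) * Real.log (1 + ‖y‖) with hc_def
          have hcL : 2 * (Real.exp (δ/β) + 2) ≤ c := by
            have h1 : T * K₁ ≤ c := by
              rw [hc_def]
              calc T * K₁ = (T/(n:ℝ)) * ((n:ℝ)*K₁) := by field_simp
                _ ≤ (T/(n:ℝ)) * Real.log (1 + ‖y‖) :=
                  mul_le_mul_of_nonneg_left hlog hη0.le
            have h2 : T * K₁ = 2 * (Real.exp (δ/β) + 2) := by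
              rw [hK₁]; field_simp
            linarith
          have e2 : Y n (k+1) ω = (1 - c) • y + ((T/(n:ℝ)) ^ α⁻¹ : ℝ) • Z (k+1) ω := by
            rw [hYrec n k ω, sub_smul, one_smul, ← hy_def, ← hc_def]
          have hnorm1 : (c - 1) * ‖y‖ ≤ ‖(1 - c) • y‖ := by
            rw [norm_smul, Real.norm_eq_abs]
            have h1 : c - 1 ≤ |1 - c| := by
              rw [abs_sub_comm]; exact le_abs_self _
            nlinarith [norm_nonneg y]
          have hnoise : ‖((T/(n:ℝ)) ^ α⁻¹ : ℝ) • Z (k+1) ω‖ ≤ 4 := by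
            rw [norm_smul, Real.norm_eq_abs, abs_of_pos hc'0]
            have h2z : ‖Z (k+1) ω‖ ≤ 4 := by
              have h1n : 1/(n:ℝ) ≤ 1 := by
                rw [div_le_one hn0]; exact hn1'
              have := hZ.2
              linarith
            nlinarith [norm_nonneg (Z (k+1) ω)]
          have htri2 : ‖(1 - c) • y‖ - ‖((T/(n:ℝ)) ^ α⁻¹ : ℝ) • Z (k+1) ω‖
              ≤ ‖Y n (k+1) ω‖ := by
            rw [e2]
            exact norm_add_ge_sub' _ _
          have hkey : Real.exp (δ/β) * ‖y‖ ≤ ‖Y n (k+1) ω‖ := by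
            have he1 : 1 ≤ Real.exp (δ/β) := Real.one_le_exp hδβ
            nlinarith [norm_nonneg y]
          calc Real.exp ((n:ℝ) * K₁ + (((k+1 : ℕ):ℝ) - 1) * δ / β)
              = Real.exp (δ/β) * Real.exp ((n:ℝ)*K₁ + ((k:ℝ)-1)*δ/β) := by
                rw [← Real.exp_add]; congr 1; push_cast; ring
            _ ≤ Real.exp (δ/β) * ‖y‖ :=
                mul_le_mul_of_nonneg_left hy (Real.exp_pos _).le
            _ ≤ ‖Y n (k+1) ω‖ := hkey
    -- probability lower bound
    have hPeq : P (Ωn n) = μ (Sa n) * μ (Sb n) ^ (n-1) := by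
      rw [hΩn_def]
      rw [hIndep.meas_biInter (S := Finset.Icc 1 n)
        (s := fun k => Z k ⁻¹' (if k = 1 then Sa n else Sb n))
        (fun i _ => ⟨if i = 1 then Sa n else Sb n,
          by split_ifs; exacts [hSa_m n, hSb_m n], rfl⟩)]
      have hsplit : Finset.Icc 1 n = insert 1 (Finset.Icc 2 n) := by
        ext k; simp only [Finset.mem_Icc, Finset.mem_insert]; omega
      rw [hsplit, Finset.prod_insert (by simp)]
      have h1 : P (Z 1 ⁻¹' (if 1 = 1 then Sa n else Sb n)) = μ (Sa n) := by
        rw [if_pos rfl]; exact hPmap 1 _ (hSa_m n)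
      have h2 : ∀ k ∈ Finset.Icc 2 n, P (Z k ⁻¹' (if k = 1 then Sa n else Sb n)) = μ (Sb n) := by
        intro k hk
        simp only [Finset.mem_Icc] at hk
        rw [if_neg (by omega)]
        exact hPmap k _ (hSb_m n)
      rw [h1, Finset.prod_congr rfl h2, Finset.prod_const, Nat.card_Icc]
      congr 2
    have hA1 : ENNReal.ofReal (c₀ * (1+B) ^ (-α) * T * Real.exp (-α * n * K₁) / n)
        ≤ μ (Sa n) := by
      refine le_trans ?_ (hμ_tail (rr n) hrr1)
      apply ENNReal.ofReal_le_ofReal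
      have heq : sphereArea d * rr n ^ (-α) / (2 ^ ((d:ℝ)+α) * α * K)
          = c₀ * rr n ^ (-α) := by
        rw [hc₀_def]; ring
      rw [heq]
      have hrrpow : rr n ^ (-α) = (Real.exp ((n:ℝ)*K₁) + B) ^ (-α) * (T/(n:ℝ)) := by
        rw [hrr_def, Real.div_rpow (by positivity) hc'0.le]
        rw [← Real.rpow_mul hη0.le α⁻¹ (-α)]
        rw [show α⁻¹ * (-α) = -1 by field_simp]
        rw [Real.rpow_neg_one]
        field_simp
      rw [hrrpow]
      have hEB : Real.exp ((n:ℝ)*K₁) + B ≤ (1 + B) * Real.exp ((n:ℝ)*K₁) := by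
        nlinarith
      have hmono : (1+B) ^ (-α) * Real.exp (-α * n * K₁)
          ≤ (Real.exp ((n:ℝ)*K₁) + B) ^ (-α) := by
        have h1 : Real.exp (-α * (n:ℝ) * K₁) = (Real.exp ((n:ℝ)*K₁)) ^ (-α) := by
          rw [← Real.exp_mul]; ring_nf
        rw [h1, ← Real.mul_rpow (by linarith) (Real.exp_pos _).le]
        exact Real.rpow_le_rpow_of_nonpos (by positivity) hEB (by linarith)
      calc c₀ * (1+B) ^ (-α) * T * Real.exp (-α * n * K₁) / n
          = c₀ * ((1+B) ^ (-α) * Real.exp (-α * n * K₁)) * (T/(n:ℝ)) := by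
            field_simp
        _ ≤ c₀ * (Real.exp ((n:ℝ)*K₁) + B) ^ (-α) * (T/(n:ℝ)) := by
            have := mul_le_mul_of_nonneg_left hmono hc₀.le
            nlinarith [hη0]
        _ = c₀ * ((Real.exp ((n:ℝ)*K₁) + B) ^ (-α) * (T/(n:ℝ))) := by ring
    have hA2 : ENNReal.ofReal (Real.exp (-(α * (1/(n:ℝ)))) / δ) ≤ μ (Sb n) := by
      refine le_trans ?_ (hμ_annulus (1 + 1/(n:ℝ)) hz1)
      apply ENNReal.ofReal_le_ofReal
      have hzpow : (1 + 1/(n:ℝ)) ^ α ≤ Real.exp (α * (1/(n:ℝ))) := by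
        have h1 : 1 + 1/(n:ℝ) ≤ Real.exp (1/(n:ℝ)) := by
          have := Real.add_one_le_exp (1/(n:ℝ)); linarith
        calc (1 + 1/(n:ℝ)) ^ α ≤ (Real.exp (1/(n:ℝ))) ^ α :=
              Real.rpow_le_rpow (by positivity) h1 hα0.le
          _ = Real.exp ((1/(n:ℝ)) * α) := (Real.exp_mul _ _).symm
          _ = Real.exp (α * (1/(n:ℝ))) := by rw [mul_comm]
      have hz0 : (0:ℝ) < (1 + 1/(n:ℝ)) ^ α := Real.rpow_pos_of_pos (by positivity) _
      have key : δ * (1 + 1/(n:ℝ)) ^ α ≤ Real.exp (α * (1/(n:ℝ))) * δ := by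
        nlinarith
      calc Real.exp (-(α * (1/(n:ℝ)))) / δ
          = (Real.exp (α * (1/(n:ℝ))) * δ)⁻¹ := by
            rw [Real.exp_neg, div_eq_mul_inv, mul_inv]
        _ ≤ (δ * (1 + 1/(n:ℝ)) ^ α)⁻¹ := inv_anti₀ (by positivity) key
        _ = 1 / (δ * (1 + 1/(n:ℝ)) ^ α) := (one_div _).symm
    -- assemble the probability bound
    have hδn : δ ^ n = δ ^ (n-1) * δ := by
      conv_lhs => rw [show n = (n-1)+1 by omega]
      rw [pow_succ]
    have hprob : ENNReal.ofReal (C * Real.exp (-α * n * K₁) / (n * δ ^ n))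
        ≤ P (Ωn n) := by
      rw [hPeq]
      have hstep : ENNReal.ofReal (C * Real.exp (-α * n * K₁) / (n * δ ^ n))
          ≤ ENNReal.ofReal ((c₀ * (1+B) ^ (-α) * T * Real.exp (-α * n * K₁) / n)
              * (Real.exp (-(α * (1/(n:ℝ)))) / δ) ^ (n-1)) := by
        apply ENNReal.ofReal_le_ofReal
        have hexp : Real.exp (-α) ≤ Real.exp (((n-1:ℕ):ℝ) * (-(α * (1/(n:ℝ))))) := by
          rw [Real.exp_le_exp, Nat.cast_sub hn1]
          push_cast
          have h1 : (α / (n:ℝ)) * ((n:ℝ) - 1) ≤ (α / (n:ℝ)) * (n:ℝ) :=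
            mul_le_mul_of_nonneg_left (by linarith) (by positivity)
          rw [div_mul_cancel₀] at h1
          · have h2 : ((n:ℝ)-1) * -(α * (1/(n:ℝ))) = -(α/(n:ℝ) * ((n:ℝ)-1)) := by ring
            rw [h2]
            linarith
          · exact ne_of_gt hn0
        have hpow2 : (Real.exp (-(α * (1/(n:ℝ)))) / δ) ^ (n-1)
            = Real.exp (((n-1:ℕ):ℝ) * (-(α * (1/(n:ℝ))))) / δ ^ (n-1) := by
          rw [div_pow, ← Real.exp_nat_mul]
        rw [hpow2]
        have hLHS : C * Real.exp (-α * n * K₁) / (n * δ ^ n)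
            = (c₀ * (1+B) ^ (-α) * T * Real.exp (-α * n * K₁) / n)
              * (Real.exp (-α) / δ ^ (n-1)) := by
          rw [hC_def, hδn]
          have hδn1 : (0:ℝ) < δ ^ (n-1) := pow_pos hδ0 _
          field_simp
        rw [hLHS]
        have hδn1 : (0:ℝ) < δ ^ (n-1) := pow_pos hδ0 _
        refine mul_le_mul_of_nonneg_left ?_ (by positivity)
        exact (div_le_div_iff_of_pos_right hδn1).2 hexp
      refine hstep.trans ?_
      rw [ENNReal.ofReal_mul (by positivity), ENNReal.ofReal_pow (by positivity)]
      exact mul_le_mul' hA1 (pow_le_pow_left' hA2 (n-1))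
    -- non-emptiness
    have hne : (Ωn n).Nonempty := by
      rw [Set.nonempty_iff_ne_empty]
      intro h
      have hprob' := hprob
      rw [h, measure_empty, le_zero_iff, ENNReal.ofReal_eq_zero] at hprob'
      have : (0:ℝ) < C * Real.exp (-α * n * K₁) / (n * δ ^ n) := by positivity
      linarith
    -- lintegral lower bound
    have hYae : AEMeasurable (Y n n) P := by
      have hall : ∀ k, AEMeasurable (Y n k) P := by
        intro k
        induction k with
        | zero =>
          have he : Y n 0 = fun _ => x₀ := funext (hY0 n)
          rw [he]; exact aemeasurable_const
        | succ k ih =>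
          have he : Y n (k+1) = fun ω => Y n k ω
              - (T/(n:ℝ) * Real.log (1+‖Y n k ω‖)) • Y n k ω
              + ((T/(n:ℝ)) ^ α⁻¹ : ℝ) • Z (k+1) ω := funext (hYrec n k)
          rw [he]
          have h1 : AEMeasurable (fun ω => T/(n:ℝ) * Real.log (1+‖Y n k ω‖)) P := by
            apply AEMeasurable.const_mul
            exact Real.measurable_log.comp_aemeasurable (aemeasurable_const.add ih.norm)
          exact (ih.sub (h1.smul ih)).add ((hZae (k+1)).const_smul ((T/(n:ℝ)) ^ α⁻¹))
      exact hall n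
    have hfae : AEMeasurable (fun ω => ENNReal.ofReal (‖Y n n ω‖ ^ β)) P := by
      have hg : Measurable (fun x : EuclideanSpace ℝ (Fin d) => ENNReal.ofReal (‖x‖ ^ β)) :=
        ENNReal.measurable_ofReal.comp
          ((Real.continuous_rpow_const hβ0.le).measurable.comp measurable_norm)
      exact hg.comp_aemeasurable hYae
    set Mn : ℝ := Real.exp ((n:ℝ) * K₁ + ((n:ℝ) - 1) * δ / β) with hMn_def
    have hsub : Ωn n ⊆ {ω | ENNReal.ofReal (Mn ^ β) ≤ ENNReal.ofReal (‖Y n n ω‖ ^ β)} := by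
      intro ω hω
      have h := hgrow ω hω n hn1 le_rfl
      exact ENNReal.ofReal_le_ofReal (Real.rpow_le_rpow (Real.exp_nonneg _) h hβ0.le)
    have hmark := mul_meas_ge_le_lintegral₀ hfae (ENNReal.ofReal (Mn ^ β))
    have hMn : Mn ^ β = Real.exp (β * ((n:ℝ)*K₁) + ((n:ℝ)-1)*δ) := by
      rw [hMn_def, ← Real.exp_mul]
      congr 1
      field_simp
    have hδpow : δ ^ n = Real.exp ((n:ℝ) * Real.log δ) := by
      rw [Real.exp_nat_mul, Real.exp_log hδ0]
    have hkeyexp : ∀ a b c : ℝ, Real.exp a * Real.exp b / Real.exp c = Real.exp (a + b - c) := by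
      intro a b c; rw [← Real.exp_add, ← Real.exp_sub]
    have hreal : Mn ^ β * (C * Real.exp (-α * n * K₁) / (n * δ ^ n))
        = C * Real.exp (-δ) * Real.exp ((n:ℝ)*γ) / n := by
      calc Mn ^ β * (C * Real.exp (-α * ↑n * K₁) / (↑n * δ ^ n))
          = C * (Real.exp (β*((n:ℝ)*K₁) + ((n:ℝ)-1)*δ) * Real.exp (-α * ↑n * K₁)
              / Real.exp ((n:ℝ)*Real.log δ)) / ↑n := by
            rw [hMn, hδpow]; ring
        _ = C * Real.exp (β*((n:ℝ)*K₁) + ((n:ℝ)-1)*δ + (-α * ↑n * K₁)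
              - (n:ℝ)*Real.log δ) / ↑n := by rw [hkeyexp]
        _ = C * Real.exp (-δ + (n:ℝ)*γ) / ↑n := by
            have harg : β*((n:ℝ)*K₁) + ((n:ℝ)-1)*δ + (-α * ↑n * K₁) - (n:ℝ)*Real.log δ
                = -δ + (n:ℝ)*γ := by rw [hγ_def]; ring
            rw [harg]
        _ = C * Real.exp (-δ) * Real.exp ((n:ℝ)*γ) / ↑n := by
            rw [Real.exp_add]; ring
    refine ⟨⟨hne, hprob, fun ω hω => hgrow ω hω n hn1 le_rfl⟩, ?_⟩
    calc ENNReal.ofReal (C * Real.exp (-δ) * Real.exp ((n:ℝ)*γ)/n)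
        = ENNReal.ofReal (Mn^β) * ENNReal.ofReal (C * Real.exp (-α * ↑n * K₁) / (↑n * δ ^ n)) := by
          rw [← ENNReal.ofReal_mul (by positivity), hreal]
      _ ≤ ENNReal.ofReal (Mn^β)
            * P {ω | ENNReal.ofReal (Mn ^ β) ≤ ENNReal.ofReal (‖Y n n ω‖ ^ β)} :=
          mul_le_mul_right (hprob.trans (measure_mono hsub)) _
      _ ≤ ∫⁻ ω, ENNReal.ofReal (‖Y n n ω‖ ^ β) ∂P := hmark
  -- conclusion
  refine ⟨C, hC, Ωn, hbig.mono (fun n h => h.1), ?_⟩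
  rw [ENNReal.tendsto_nhds_top_iff_nnreal]
  intro x
  have hdiv : Tendsto (fun m : ℕ => C * Real.exp (-δ) * Real.exp ((m:ℝ)*γ)/m) atTop atTop := by
    have h1 : Tendsto (fun m : ℕ => ((m:ℝ)*γ)) atTop atTop :=
      tendsto_natCast_atTop_atTop.atTop_mul_const hγ
    have h2 : Tendsto (fun x : ℝ => Real.exp x / x ^ 1) atTop atTop :=
      Real.tendsto_exp_div_pow_atTop 1
    have h3 := (h2.comp h1).const_mul_atTop
      (show (0:ℝ) < C * Real.exp (-δ) * γ by positivity)
    apply h3.congr'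
    filter_upwards [eventually_ge_atTop 1] with m hm
    have hm0 : (0:ℝ) < m := by
      have : (1:ℝ) ≤ (m:ℝ) := by exact_mod_cast hm
      linarith
    simp only [Function.comp, pow_one]
    field_simp
  filter_upwards [hbig, hdiv.eventually_gt_atTop (x:ℝ)] with m h1 h2
  refine lt_of_lt_of_le ?_ h1.2
  rw [← ENNReal.ofReal_coe_nnreal]
  exact (ENNReal.ofReal_lt_ofReal_iff ((x.coe_nonneg).trans_lt h2)).2 h2
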